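/- arXiv:0704.0257 — 5 statements merged into one kernel-verified Lean document; each statement's English description precedes it below -/
import Mathlib

section
/- Let b_0, …, b_n be positive integers, let 1 ≤ k ≤ n, and let p be a prime. Then the p-adic valuation of ℓ_k equals the sum of the k largest values among the p-adic valuations ν_p(b_0), …, ν_p(b_n); that is, if e_0 ≥ e_1 ≥ ⋯ ≥ e_n is the multiset {ν_p(b_i)} sorted in decreasing order, then ν_p(ℓ_k) = e_0 + e_1 + ⋯ + e_{k−1}. -/
/-- `ell b k` is the number `ℓ_k` of Kawasaki: the least common multiple, over all
`(k+1)`-element subsets `{i_0 < ⋯ < i_k}` of `{0, …, n}`, of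
`b_{i_0} ⋯ b_{i_k} / gcd(b_{i_0}, …, b_{i_k})`. -/
def ell {n : ℕ} (b : Fin (n + 1) → ℕ) (k : ℕ) : ℕ :=
  ((Finset.univ : Finset (Fin (n + 1))).powersetCard (k + 1)).lcm
    (fun s => (∏ i ∈ s, b i) / s.gcd b)

/- ### Auxiliary lemmas -/

/-- Prepending a dominating element can only increase the sum of the first `j` entries. -/
lemma take_sum_cons_le (a : ℕ) (l : List ℕ) (ha : ∀ x ∈ l, x ≤ a) (j : ℕ) :
    (l.take j).sum ≤ ((a :: l).take j).sum := by
  cases j with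
  | zero => simp
  | succ j' =>
    have hrhs : ((a :: l).take (j' + 1)).sum = a + (l.take j').sum := by simp
    rw [hrhs]
    by_cases hlt : j' < l.length
    · rw [List.sum_take_succ l j' hlt]
      have : l[j'] ≤ a := ha _ (List.getElem_mem hlt)
      omega
    · rw [List.take_of_length_le (by omega), List.take_of_length_le (by omega)]
      omega

/-- Any sub-multiset of a decreasingly sorted list has sum at most the sum of the
corresponding initial segment. -/
lemma sum_le_take_sum_of_le : ∀ (e : List ℕ), e.Pairwise (· ≥ ·) →
    ∀ m : Multiset ℕ, m ≤ (e : Multiset ℕ) →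
      m.sum ≤ (e.take (Multiset.card m)).sum := by
  intro e
  induction e with
  | nil =>
    intro _ m hm
    have : m = 0 := le_antisymm hm (Multiset.zero_le m)
    simp [this]
  | cons a e' ih =>
    intro hs m hm
    have ha : ∀ x ∈ e', x ≤ a := fun x hx => (List.pairwise_cons.mp hs).1 x hx
    have hs' : e'.Pairwise (· ≥ ·) := (List.pairwise_cons.mp hs).2
    have hm' : m ≤ a ::ₘ (e' : Multiset ℕ) := by simpa using hm
    by_cases hmem : a ∈ m
    · have h1 : m.erase a ≤ (e' : Multiset ℕ) := by
        have := Multiset.erase_le_erase a hm'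
        simpa using this
      have hcons : a ::ₘ m.erase a = m := Multiset.cons_erase hmem
      have hcard : Multiset.card m = Multiset.card (m.erase a) + 1 := by
        rw [← hcons]; simp
      have hsum : m.sum = a + (m.erase a).sum := by
        rw [← hcons]; simp
      rw [hsum, hcard]
      have : ((a :: e').take (Multiset.card (m.erase a) + 1)).sum
          = a + (e'.take (Multiset.card (m.erase a))).sum := by simp
      rw [this]
      exact Nat.add_le_add_left (ih hs' _ h1) a
    · have h1 : m ≤ (e' : Multiset ℕ) := by
        rw [Multiset.le_iff_count]
        intro x
        by_cases hx : x = a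
        · subst hx
          simp [Multiset.count_eq_zero_of_notMem hmem]
        · have := Multiset.le_iff_count.mp hm' x
          rwa [Multiset.count_cons_of_ne hx] at this
      calc m.sum ≤ (e'.take (Multiset.card m)).sum := ih hs' _ h1
        _ ≤ ((a :: e').take (Multiset.card m)).sum := take_sum_cons_le a e' ha _
      
/-- A sub-multiset of a mapped multiset is the image of a sub-multiset. -/
lemma exists_le_map {α β : Type*} [DecidableEq α] [DecidableEq β] (f : α → β) :
    ∀ (m : Multiset β) (s : Multiset α), m ≤ s.map f → ∃ s' ≤ s, s'.map f = m := by
  intro m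
  induction m using Multiset.induction with
  | empty => intro s _; exact ⟨0, Multiset.zero_le s, rfl⟩
  | cons a m' ih =>
    intro s hm
    have hmem : a ∈ s.map f := Multiset.mem_of_le hm (Multiset.mem_cons_self a m')
    obtain ⟨x, hx, hfx⟩ := Multiset.mem_map.mp hmem
    have hmap : (s.erase x).map f = (s.map f).erase a := by
      conv_rhs => rw [← Multiset.cons_erase hx]
      rw [Multiset.map_cons, hfx, Multiset.erase_cons_head]
    have hle : m' ≤ (s.erase x).map f := by
      rw [hmap]
      have := Multiset.erase_le_erase a hm
      simpa using this
    obtain ⟨s'', hs''le, hs''⟩ := ih _ hle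
    refine ⟨x ::ₘ s'', ?_, by simp [hs'', hfx]⟩
    calc x ::ₘ s'' ≤ x ::ₘ s.erase x := Multiset.cons_le_cons x hs''le
      _ = s := Multiset.cons_erase hx

/-- Factorization of a finset lcm. -/
lemma factorization_finset_lcm {α : Type*} [DecidableEq α] (p : ℕ) :
    ∀ (S : Finset α) (f : α → ℕ), (∀ a ∈ S, f a ≠ 0) →
      (S.lcm f).factorization p = S.sup fun a => (f a).factorization p := by
  intro S
  induction S using Finset.induction_on with
  | empty => intro f _; simp
  | insert _ _ ha ih =>
    rename_i a S
    intro f hf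
    rw [Finset.lcm_insert, Finset.sup_insert]
    have h1 : f a ≠ 0 := hf a (Finset.mem_insert_self a S)
    have h2 : S.lcm f ≠ 0 := by
      rw [Ne, Finset.lcm_eq_zero_iff]
      rintro ⟨x, hx, hx0⟩
      exact hf x (Finset.mem_insert_of_mem hx) hx0
    have : (lcm (f a) (S.lcm f)).factorization
        = (f a).factorization ⊔ (S.lcm f).factorization :=
      Nat.factorization_lcm h1 h2
    rw [this, Finsupp.sup_apply, ih f (fun x hx => hf x (Finset.mem_insert_of_mem hx))]

/-- Factorization of a finset gcd. -/
lemma factorization_finset_gcd {α : Type*} [DecidableEq α] (p : ℕ) (S : Finset α)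
    (hS : S.Nonempty) (f : α → ℕ) (hf : ∀ a ∈ S, f a ≠ 0) :
    (S.gcd f).factorization p = S.inf' hS fun a => (f a).factorization p := by
  induction hS using Finset.Nonempty.cons_induction with
  | singleton a => simp
  | cons a S ha hS ih =>
    rw [Finset.inf'_cons]
    have hg : (Finset.cons a S ha).gcd f = gcd (f a) (S.gcd f) := by
      rw [Finset.cons_eq_insert, Finset.gcd_insert]
    rw [hg]
    have h1 : f a ≠ 0 := hf a (Finset.mem_cons_self a S)
    have h2 : S.gcd f ≠ 0 := by
      rw [Ne, Finset.gcd_eq_zero_iff]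
      intro h
      obtain ⟨x, hx⟩ := hS
      exact hf x (Finset.mem_cons_of_mem hx) (h x hx)
    have : (gcd (f a) (S.gcd f)).factorization
        = (f a).factorization ⊓ (S.gcd f).factorization :=
      Nat.factorization_gcd h1 h2
    rw [this, Finsupp.inf_apply, ih (fun x hx => hf x (Finset.mem_cons_of_mem hx))]

/-- for positive integers `b_0, …, b_n`, `1 ≤ k ≤ n`, and a prime `p`,
the `p`-adic valuation of `ℓ_k` is the sum of the `k` largest values among the
`p`-adic valuations `ν_p(b_0), …, ν_p(b_n)`: if `e` is the multiset
`{ν_p(b_i)}` listed in (weakly) decreasing order, then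
`ν_p(ℓ_k) = e_0 + ⋯ + e_{k-1}`. -/
theorem factorization_ell {n : ℕ} (b : Fin (n + 1) → ℕ) (hb : ∀ i, 0 < b i)
    (k : ℕ) (hk1 : 1 ≤ k) (hkn : k ≤ n) (p : ℕ) (hp : p.Prime)
    (e : List ℕ) (he : e.Perm (List.ofFn fun i => (b i).factorization p))
    (hsorted : e.Pairwise (· ≥ ·)) :
    (ell b k).factorization p = (e.take k).sum := by
  classical
  set v : Fin (n + 1) → ℕ := fun i => (b i).factorization p with hv
  have helen : e.length = n + 1 := by
    rw [he.length_eq, List.length_ofFn]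
  have hemul : (e : Multiset ℕ) = Finset.univ.val.map v := by
    rw [Fin.univ_val_map]
    exact Multiset.coe_eq_coe.mpr he
  set P := ((Finset.univ : Finset (Fin (n + 1))).powersetCard (k + 1)) with hP
  -- basic facts about members of `P`
  have hmem : ∀ s ∈ P, s.card = k + 1 ∧ s.Nonempty := by
    intro s hs
    rw [hP, Finset.mem_powersetCard] at hs
    exact ⟨hs.2, Finset.card_pos.mp (by omega)⟩
  have hne0 : ∀ s ∈ P, (∏ i ∈ s, b i) / s.gcd b ≠ 0 ∧ s.gcd b ∣ ∏ i ∈ s, b i := by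
    intro s hs
    obtain ⟨hcard, hsne⟩ := hmem s hs
    obtain ⟨i, hi⟩ := hsne
    have hdvd : s.gcd b ∣ ∏ j ∈ s, b j :=
      (Finset.gcd_dvd hi).trans (Finset.dvd_prod_of_mem b hi)
    have hprodpos : 0 < ∏ j ∈ s, b j := Finset.prod_pos fun j _ => hb j
    have hgcdpos : 0 < s.gcd b := by
      rcases Nat.eq_zero_or_pos (s.gcd b) with h | h
      · rw [Finset.gcd_eq_zero_iff] at h
        exact absurd (h i hi) (hb i).ne'
      · exact h
    exact ⟨(Nat.div_pos (Nat.le_of_dvd hprodpos hdvd) hgcdpos).ne', hdvd⟩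
  -- the valuation of each term
  have hterm : ∀ s, ∀ hs : s ∈ P, (((∏ i ∈ s, b i) / s.gcd b)).factorization p
      = (∑ i ∈ s, v i) - s.inf' (hmem s hs).2 v := by
    intro s hs
    obtain ⟨hcard, hsne⟩ := hmem s hs
    obtain ⟨_, hdvd⟩ := hne0 s hs
    rw [Nat.factorization_div hdvd, Finsupp.tsub_apply]
    congr 1
    · rw [Nat.factorization_prod (fun i _ => (hb i).ne'), Finset.sum_apply']
    · exact factorization_finset_gcd p s hsne b (fun i _ => (hb i).ne')
  -- valuation of the lcm as a sup
  have hlcm : (ell b k).factorization p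
      = P.sup fun s => (((∏ i ∈ s, b i) / s.gcd b)).factorization p := by
    exact factorization_finset_lcm p P _ (fun s hs => (hne0 s hs).1)
  rw [hlcm]
  apply le_antisymm
  · -- upper bound
    apply Finset.sup_le
    intro s hs
    obtain ⟨hcard, hsne⟩ := hmem s hs
    rw [hterm s hs]
    obtain ⟨j, hj, hjeq⟩ := Finset.exists_mem_eq_inf' hsne v
    rw [hjeq]
    have hsplit : (∑ i ∈ s, v i) = v j + ∑ i ∈ s.erase j, v i :=
      (Finset.add_sum_erase s v hj).symm
    have hcard' : (s.erase j).card = k := by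
      rw [Finset.card_erase_of_mem hj, hcard]
      omega
    -- apply the multiset lemma
    have hle : ((s.erase j).val.map v) ≤ (e : Multiset ℕ) := by
      rw [hemul]
      exact Multiset.map_le_map (Finset.val_le_iff.mpr (Finset.subset_univ _))
    have := sum_le_take_sum_of_le e hsorted _ hle
    rw [Multiset.card_map] at this
    have hms : ((s.erase j).val.map v).sum = ∑ i ∈ s.erase j, v i := rfl
    rw [hms] at this
    have hcards : Multiset.card (s.erase j).val = k := hcard'
    rw [hcards] at this
    omega
  · -- lower bound: pick a subset realizing the `k+1` largest values
    have htakele : ((e.take (k + 1) : List ℕ) : Multiset ℕ) ≤ (e : Multiset ℕ) := by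
      rw [Multiset.coe_le]
      exact (List.take_sublist (k + 1) e).subperm
    rw [hemul] at htakele
    obtain ⟨s', hs'le, hs'map⟩ := exists_le_map v _ _ htakele
    have hs'nodup : s'.Nodup := Multiset.nodup_of_le hs'le Finset.univ.nodup
    set t : Finset (Fin (n + 1)) := ⟨s', hs'nodup⟩ with ht
    have hklen : k + 1 ≤ e.length := by omega
    have htcard : t.card = k + 1 := by
      have h := congrArg Multiset.card hs'map
      simp [List.length_take, helen] at h
      show Multiset.card s' = k + 1
      omega
    have htP : t ∈ P := by
      rw [hP, Finset.mem_powersetCard]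
      exact ⟨Finset.subset_univ t, htcard⟩
    refine le_trans ?_ (Finset.le_sup htP)
    rw [hterm t htP]
    have htne : t.Nonempty := (hmem t htP).2
    have hksucc : k < e.length := by omega
    -- sum over t
    have hsum : (∑ i ∈ t, v i) = (e.take k).sum + e[k] := by
      have h1 : (∑ i ∈ t, v i) = (s'.map v).sum := rfl
      rw [h1, hs'map]
      have := List.sum_take_succ e k hksucc
      simpa using this
    -- the inf is at most e[k]
    have hinf : t.inf' (hmem t htP).2 v ≤ e[k] := by
      have hgetmem : e[k] ∈ e.take (k + 1) := by
        have h : e[k] = (e.take (k + 1))[k]'(by simp [List.length_take]; omega) := by simp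
        rw [h]
        exact List.getElem_mem _
      have : e[k] ∈ s'.map v := by rw [hs'map]; exact hgetmem
      obtain ⟨i, hi, hieq⟩ := Multiset.mem_map.mp this
      have hit : i ∈ t := hi
      calc t.inf' (hmem t htP).2 v ≤ v i := Finset.inf'_le v hit
        _ = e[k] := hieq
    rw [hsum]
    omega
end

section
/- Let b_0, …, b_n be positive integers and let k, m ≥ 1 be integers with k + m ≤ n. Then ℓ_{k+m} divides ℓ_k · ℓ_m. (In particular, the coefficient ℓ_k·ℓ_m/ℓ_{k+m} appearing in Kawasaki's product formula for the cohomology of weighted projective space is an integer.) -/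
/-- for positive integers `b_0, …, b_n` and `k, m ≥ 1` with
`k + m ≤ n`, `ℓ_{k+m}` divides `ℓ_k · ℓ_m`. -/
theorem ell_add_dvd_mul {n : ℕ} (b : Fin (n + 1) → ℕ) (hb : ∀ i, 0 < b i)
    (k m : ℕ) (hk : 1 ≤ k) (hm : 1 ≤ m) (hkm : k + m ≤ n) :
    ell b (k + m) ∣ ell b k * ell b m := by
  unfold ell
  apply Finset.lcm_dvd
  intro s hs
  rw [Finset.mem_powersetCard] at hs
  obtain ⟨-, hcard⟩ := hs
  have hsne : s.Nonempty := Finset.card_pos.mp (by omega)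
  obtain ⟨j, hj⟩ := hsne
  have hecard : (s.erase j).card = k + m := by
    rw [Finset.card_erase_of_mem hj, hcard]; omega
  obtain ⟨t1, ht1sub, ht1card⟩ := Finset.exists_subset_card_eq (s := s.erase j) (n := k) (by omega)
  set t2 := s.erase j \ t1 with ht2def
  have ht2sub : t2 ⊆ s.erase j := Finset.sdiff_subset
  have ht2card : t2.card = m := by
    rw [ht2def, Finset.card_sdiff_of_subset ht1sub, hecard, ht1card]; omega
  have hjt1 : j ∉ t1 := fun h => Finset.notMem_erase j s (ht1sub h)
  have hjt2 : j ∉ t2 := fun h => Finset.notMem_erase j s (ht2sub h)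
  set s1 := insert j t1 with hs1def
  set s2 := insert j t2 with hs2def
  have hs1card : s1.card = k + 1 := by
    rw [hs1def, Finset.card_insert_of_notMem hjt1, ht1card]
  have hs2card : s2.card = m + 1 := by
    rw [hs2def, Finset.card_insert_of_notMem hjt2, ht2card]
  have hunion : s1 ∪ s2 = s := by
    have h1 : s1 ∪ s2 = insert j (t1 ∪ t2) := by
      ext x; simp [hs1def, hs2def]
    rw [h1, ht2def, Finset.union_sdiff_of_subset ht1sub, Finset.insert_erase hj]
  have hinter : s1 ∩ s2 = {j} := by
    ext x
    simp only [hs1def, hs2def, ht2def, Finset.mem_inter, Finset.mem_insert,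
      Finset.mem_sdiff, Finset.mem_singleton]
    tauto
  have hprod : (∏ i ∈ s1, b i) * (∏ i ∈ s2, b i) = (∏ i ∈ s, b i) * b j := by
    rw [← Finset.prod_union_inter, hunion, hinter, Finset.prod_singleton]
  set g1 := s1.gcd b with hg1def
  set g2 := s2.gcd b with hg2def
  have hgcd : s.gcd b = Nat.gcd g1 g2 := by
    rw [← hunion, Finset.gcd_union]; rfl
  have hjmem1 : j ∈ s1 := Finset.mem_insert_self j t1
  have hjmem2 : j ∈ s2 := Finset.mem_insert_self j t2
  have hg1j : g1 ∣ b j := Finset.gcd_dvd hjmem1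
  have hg2j : g2 ∣ b j := Finset.gcd_dvd hjmem2
  have hLj : Nat.lcm g1 g2 ∣ b j := Nat.lcm_dvd hg1j hg2j
  have hg1A1 : g1 ∣ ∏ i ∈ s1, b i := hg1j.trans (Finset.dvd_prod_of_mem b hjmem1)
  have hg2A2 : g2 ∣ ∏ i ∈ s2, b i := hg2j.trans (Finset.dvd_prod_of_mem b hjmem2)
  have hgA : s.gcd b ∣ ∏ i ∈ s, b i :=
    (Finset.gcd_dvd hj).trans (Finset.dvd_prod_of_mem b hj)
  have key : (∏ i ∈ s, b i) / s.gcd b ∣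
      ((∏ i ∈ s1, b i) / g1) * ((∏ i ∈ s2, b i) / g2) := by
    refine ⟨b j / Nat.lcm g1 g2, ?_⟩
    rw [Nat.div_mul_div_comm hg1A1 hg2A2, Nat.div_mul_div_comm hgA hLj, hprod, hgcd,
      Nat.gcd_mul_lcm]
  refine key.trans (mul_dvd_mul ?_ ?_)
  · exact Finset.dvd_lcm (by rw [Finset.mem_powersetCard]; exact ⟨Finset.subset_univ _, hs1card⟩)
  · exact Finset.dvd_lcm (by rw [Finset.mem_powersetCard]; exact ⟨Finset.subset_univ _, hs2card⟩)
end

section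
/- Let b_0, …, b_n be positive integers and let 1 ≤ k ≤ n − 1. Then ℓ_k divides ℓ_{k+1}. -/
/-- for positive integers `b_0, …, b_n` and `1 ≤ k ≤ n - 1`,
`ℓ_k` divides `ℓ_{k+1}`. -/
theorem ell_dvd_ell_succ {n : ℕ} (b : Fin (n + 1) → ℕ) (hb : ∀ i, 0 < b i)
    (k : ℕ) (hk : 1 ≤ k) (hkn : k + 1 ≤ n) :
    ell b k ∣ ell b (k + 1) := by
  unfold ell
  apply Finset.lcm_dvd
  intro s hs
  rw [Finset.mem_powersetCard] at hs
  obtain ⟨-, hcard⟩ := hs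
  obtain ⟨u, hsu, -, hucard⟩ :=
    Finset.exists_subsuperset_card_eq (s.subset_univ) (n := k + 2)
      (by omega) (by simp [Finset.card_univ]; omega)
  have hu : u ∈ (Finset.univ : Finset (Fin (n + 1))).powersetCard (k + 2) := by
    rw [Finset.mem_powersetCard]; exact ⟨u.subset_univ, hucard⟩
  refine dvd_trans ?_ (Finset.dvd_lcm hu)
  -- main divisibility: ∏ s / gcd s ∣ ∏ u / gcd u
  have hsne : s.Nonempty := Finset.card_pos.mp (by omega)
  obtain ⟨i, hi⟩ := hsne
  have hdiff : (u \ s).Nonempty := by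
    rw [← Finset.card_pos, Finset.card_sdiff_of_subset hsu]; omega
  obtain ⟨j, hj⟩ := hdiff
  have hgs : s.gcd b ∣ ∏ x ∈ s, b x :=
    (Finset.gcd_dvd hi).trans (Finset.dvd_prod_of_mem b hi)
  have hgu : u.gcd b ∣ ∏ x ∈ u \ s, b x :=
    (Finset.gcd_dvd (Finset.mem_sdiff.mp hj).1).trans (Finset.dvd_prod_of_mem b hj)
  have hsplit : (∏ x ∈ u \ s, b x) * ∏ x ∈ s, b x = ∏ x ∈ u, b x :=
    Finset.prod_sdiff hsu
  have hguu : u.gcd b ∣ ∏ x ∈ u, b x := hgu.trans ⟨∏ x ∈ s, b x, hsplit.symm⟩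
  rw [Nat.dvd_div_iff_mul_dvd hguu]
  calc u.gcd b * ((∏ x ∈ s, b x) / s.gcd b)
      ∣ (∏ x ∈ u \ s, b x) * ((∏ x ∈ s, b x) / s.gcd b * s.gcd b) := by
        rw [Nat.div_mul_cancel hgs]
        exact mul_dvd_mul hgu (Nat.div_dvd_of_dvd hgs)
    _ ∣ ∏ x ∈ u, b x := by
        rw [Nat.div_mul_cancel hgs, hsplit]
end

section
/- Let b_0, …, b_n be positive integers and let 1 ≤ k, m ≤ n be integers with k + m ≥ n + 1. Then the product b_0·b_1·⋯·b_n divides ℓ_k · ℓ_m. -/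
open Finset

lemma gcd_dvd_prod' {n : ℕ} (b : Fin (n + 1) → ℕ) {S : Finset (Fin (n+1))} {i0 : Fin (n+1)}
    (hi0 : i0 ∈ S) : S.gcd b ∣ ∏ i ∈ S, b i :=
  (Finset.gcd_dvd hi0).trans (Finset.dvd_prod_of_mem b hi0)

lemma term_ne_zero {n : ℕ} (b : Fin (n + 1) → ℕ) (hb : ∀ i, 0 < b i)
    {S : Finset (Fin (n+1))} (hS : S.Nonempty) : (∏ i ∈ S, b i) / S.gcd b ≠ 0 := by
  obtain ⟨i0, hi0⟩ := hS
  have hd := gcd_dvd_prod' b hi0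
  have hprod : (∏ i ∈ S, b i) ≠ 0 := by
    exact Finset.prod_ne_zero_iff.mpr fun i _ => (hb i).ne'
  intro h
  have := Nat.div_mul_cancel hd
  rw [h, zero_mul] at this
  exact hprod this.symm

lemma ell_ne_zero {n : ℕ} (b : Fin (n + 1) → ℕ) (hb : ∀ i, 0 < b i) (k : ℕ) (hk : k ≤ n) :
    ell b k ≠ 0 := by
  rw [ell]
  intro h
  rw [Finset.lcm_eq_zero_iff] at h
  obtain ⟨S, hS, h0⟩ := h
  rw [Finset.mem_powersetCard] at hS
  have hSne : S.Nonempty := Finset.card_pos.mp (by rw [hS.2]; exact Nat.succ_pos k)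
  exact term_ne_zero b hb hSne (by simpa using h0)

lemma sum_erase_le_ell {n : ℕ} (b : Fin (n + 1) → ℕ) (hb : ∀ i, 0 < b i) (k : ℕ) (hk : k ≤ n)
    (p : ℕ) {S : Finset (Fin (n+1))} (hS : S.card = k + 1) {i0 : Fin (n+1)} (hi0 : i0 ∈ S) :
    ∑ i ∈ S.erase i0, (b i).factorization p ≤ (ell b k).factorization p := by
  have hd := gcd_dvd_prod' b hi0
  have hne : ∀ i ∈ S, b i ≠ 0 := fun i _ => (hb i).ne'
  have hprod : (∏ i ∈ S, b i) ≠ 0 := Finset.prod_ne_zero_iff.mpr hne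
  have hSne : S.Nonempty := ⟨i0, hi0⟩
  have htne := term_ne_zero b hb hSne
  have hgne : S.gcd b ≠ 0 := by
    intro h
    have := Nat.div_mul_cancel hd
    rw [h, mul_zero] at this
    exact hprod this.symm
  -- factorization of the term
  have hmul : ((∏ i ∈ S, b i) / S.gcd b) * S.gcd b = ∏ i ∈ S, b i := Nat.div_mul_cancel hd
  have hfac : ((∏ i ∈ S, b i) / S.gcd b).factorization p + (S.gcd b).factorization p
      = ∑ i ∈ S, (b i).factorization p := by
    have h1 := Nat.factorization_mul htne hgne
    rw [hmul] at h1
    have h2 := Nat.factorization_prod hne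
    rw [h2] at h1
    have := congrArg (fun f => f p) h1
    simpa using this.symm
  have hgcd_le : (S.gcd b).factorization p ≤ (b i0).factorization p := by
    have := (Nat.factorization_le_iff_dvd hgne (hb i0).ne').mpr (Finset.gcd_dvd hi0)
    exact this p
  have hsum : ∑ i ∈ S, (b i).factorization p
      = (b i0).factorization p + ∑ i ∈ S.erase i0, (b i).factorization p :=
    (Finset.add_sum_erase S _ hi0).symm
  have hterm_le : ((∏ i ∈ S, b i) / S.gcd b).factorization p ≤ (ell b k).factorization p := by
    have hdvd : ((∏ i ∈ S, b i) / S.gcd b) ∣ ell b k :=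
      Finset.dvd_lcm (Finset.mem_powersetCard.mpr ⟨Finset.subset_univ S, hS⟩)
    exact (Nat.factorization_le_iff_dvd htne (ell_ne_zero b hb k hk)).mpr hdvd p
  omega

/-- for positive integers `b_0, …, b_n` and `1 ≤ k, m ≤ n` with
`k + m ≥ n + 1`, the product `b_0 ⋯ b_n` divides `ℓ_k · ℓ_m`. -/
theorem prod_dvd_ell_mul_ell {n : ℕ} (b : Fin (n + 1) → ℕ) (hb : ∀ i, 0 < b i)
    (k m : ℕ) (hk1 : 1 ≤ k) (hkn : k ≤ n) (hm1 : 1 ≤ m) (hmn : m ≤ n)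
    (hkm : n + 1 ≤ k + m) :
    (∏ i, b i) ∣ ell b k * ell b m := by
  have hprod : (∏ i, b i) ≠ 0 := Finset.prod_ne_zero_iff.mpr fun i _ => (hb i).ne'
  have hlk := ell_ne_zero b hb k hkn
  have hlm := ell_ne_zero b hb m hmn
  rw [← Nat.factorization_le_iff_dvd hprod (mul_ne_zero hlk hlm)]
  intro p
  rw [Nat.factorization_mul hlk hlm]
  rw [Nat.factorization_prod (fun i _ => (hb i).ne')]
  simp only [Finsupp.coe_add, Pi.add_apply, Finset.sum_apply']
  set e : Fin (n+1) → ℕ := fun i => (b i).factorization p with he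
  -- choose i0 minimizing e
  obtain ⟨i0, -, hi0min⟩ := Finset.exists_min_image Finset.univ e ⟨0, Finset.mem_univ 0⟩
  -- choose Sm ∋ i0 of card m+1
  obtain ⟨Sm, hi0Sm, -, hSmcard⟩ := Finset.exists_subsuperset_card_eq (n := m + 1)
    (Finset.subset_univ {i0}) (by simp) (by simp [Finset.card_univ]; omega)
  rw [Finset.singleton_subset_iff] at hi0Sm
  -- choose j ∈ Sm, j ≠ i0
  have herase : (Sm.erase i0).Nonempty := by
    rw [← Finset.card_pos, Finset.card_erase_of_mem hi0Sm, hSmcard]; omega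
  obtain ⟨j, hj⟩ := herase
  have hjne : j ≠ i0 := Finset.ne_of_mem_erase hj
  have hjSm : j ∈ Sm := Finset.mem_of_mem_erase hj
  -- base set for Sk
  have hcompl : (Finset.univ \ Sm).card = n - m := by
    rw [Finset.card_sdiff_of_subset (Finset.subset_univ Sm), hSmcard, Finset.card_univ, Fintype.card_fin]
    omega
  have hi0nc : i0 ∉ Finset.univ \ Sm := by simp [hi0Sm]
  have hjnc : j ∉ Finset.univ \ Sm := by simp [hjSm]
  have hbasecard : (insert i0 (insert j (Finset.univ \ Sm))).card ≤ k + 1 := by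
    calc (insert i0 (insert j (Finset.univ \ Sm))).card
        ≤ (insert j (Finset.univ \ Sm)).card + 1 := Finset.card_insert_le _ _
      _ ≤ (Finset.univ \ Sm).card + 1 + 1 := by
          have := Finset.card_insert_le j (Finset.univ \ Sm); omega
      _ ≤ k + 1 := by omega
  obtain ⟨Sk, hbaseSk, -, hSkcard⟩ := Finset.exists_subsuperset_card_eq
    (Finset.subset_univ (insert i0 (insert j (Finset.univ \ Sm)))) hbasecard
    (by simp [Finset.card_univ]; omega)
  have hi0Sk : i0 ∈ Sk := hbaseSk (Finset.mem_insert_self _ _)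
  -- the two key bounds
  have hA := sum_erase_le_ell b hb k hkn p hSkcard hi0Sk
  have hB := sum_erase_le_ell b hb m hmn p hSmcard hi0Sm
  -- lower bound for the Sk sum
  have hsubset : insert j (Finset.univ \ Sm) ⊆ Sk.erase i0 := by
    intro x hx
    rw [Finset.mem_erase]
    constructor
    · rintro rfl
      rcases Finset.mem_insert.mp hx with h | h
      · exact hjne h.symm
      · exact hi0nc h
    · exact hbaseSk (Finset.mem_insert_of_mem hx)
  have hSk_ge : e j + ∑ i ∈ Finset.univ \ Sm, e i ≤ ∑ i ∈ Sk.erase i0, e i := by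
    calc e j + ∑ i ∈ Finset.univ \ Sm, e i
        = ∑ i ∈ insert j (Finset.univ \ Sm), e i := (Finset.sum_insert hjnc).symm
      _ ≤ ∑ i ∈ Sk.erase i0, e i := Finset.sum_le_sum_of_subset hsubset
  have hej : e i0 ≤ e j := hi0min j (Finset.mem_univ j)
  -- decompositions of the total sum
  have htot : ∑ i, e i = ∑ i ∈ Finset.univ \ Sm, e i + ∑ i ∈ Sm, e i :=
    (Finset.sum_sdiff (Finset.subset_univ Sm)).symm
  have hSm_split : ∑ i ∈ Sm, e i = e i0 + ∑ i ∈ Sm.erase i0, e i :=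
    (Finset.add_sum_erase Sm e hi0Sm).symm
  have hA' : (∑ i ∈ Sk.erase i0, e i) ≤ (ell b k).factorization p := hA
  have hB' : (∑ i ∈ Sm.erase i0, e i) ≤ (ell b m).factorization p := hB
  have heta : Finset.univ.sum e = ∑ i, e i := rfl
  omega
end

section
/- Let b_0, …, b_n be positive integers. The free abelian group on generators γ_0, γ_1, …, γ_n, equipped with the bilinear multiplication determined by γ_k · γ_m = (ℓ_k·ℓ_m/ℓ_{k+m}) γ_{k+m} when k + m ≤ n and γ_k · γ_m = 0 when k + m > n, is a commutative associative unital ring with unit γ_0. (This is the ring structure of the integral singular cohomology of the weighted projective space ℂP^n_{(b)} as computed by Kawasaki, with γ_k the generator in degree 2k.) -/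
/-- The bilinear multiplication on the free abelian group `ℤ^{n+1}` with basis
`γ_0, …, γ_n` determined by `γ_k · γ_m = (ℓ_k ℓ_m / ℓ_{k+m}) γ_{k+m}` when
`k + m ≤ n` and `γ_k · γ_m = 0` when `k + m > n` (Kawasaki's product on
`H^*(ℂP^n_{(b)}; ℤ)`, with `γ_k` the generator of degree `2k`). -/
def kawasakiMul {n : ℕ} (b : Fin (n + 1) → ℕ) (x y : Fin (n + 1) → ℤ) :
    Fin (n + 1) → ℤ := fun j =>
  ∑ k : Fin (n + 1), ∑ m : Fin (n + 1),
    if (k : ℕ) + (m : ℕ) = (j : ℕ) then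
      x k * y m * ((ell b k * ell b m) / ell b (k + m) : ℕ)
    else 0

theorem fact_le_of_dvd {a c : ℕ} (ha : a ≠ 0) (hc : c ≠ 0) (h : a ∣ c) (p : ℕ) :
    a.factorization p ≤ c.factorization p :=
  (Nat.factorization_le_iff_dvd ha hc).mpr h p

section aux
variable {n : ℕ} (b : Fin (n + 1) → ℕ) (hb : ∀ i, 0 < b i)
include hb

theorem quot_pos {s : Finset (Fin (n + 1))} (hs : s.Nonempty) :
    0 < (∏ i ∈ s, b i) / s.gcd b := by
  obtain ⟨i, hi⟩ := hs
  have hprod : 0 < ∏ i ∈ s, b i := Finset.prod_pos fun i _ => hb i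
  have hgcd : s.gcd b ∣ ∏ i ∈ s, b i :=
    (Finset.gcd_dvd hi).trans (Finset.dvd_prod_of_mem b hi)
  have hgpos : 0 < s.gcd b := by
    rcases Nat.eq_zero_or_pos (s.gcd b) with h | h
    · exact absurd (Finset.gcd_eq_zero_iff.mp h i hi) (hb i).ne'
    · exact h
  exact Nat.div_pos (Nat.le_of_dvd hprod hgcd) hgpos

theorem ell_pos (k : ℕ) : 0 < ell b k := by
  rw [Nat.pos_iff_ne_zero, Ne, ell, Finset.lcm_eq_zero_iff]
  rintro ⟨s, hs, h0⟩
  simp only [Finset.mem_coe, Finset.mem_powersetCard] at hs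
  have : s.Nonempty := Finset.card_pos.mp (by omega)
  exact (quot_pos b hb this).ne' h0

theorem ell_zero : ell b 0 = 1 := by
  refine Nat.dvd_one.mp (Finset.lcm_dvd fun s hs => ?_)
  simp only [Finset.mem_powersetCard] at hs
  obtain ⟨i, rfl⟩ := Finset.card_eq_one.mp hs.2
  simp [Nat.div_self (hb i)]

theorem ell_dvd_mul (k m : ℕ) : ell b (k + m) ∣ ell b k * ell b m := by
  apply Finset.lcm_dvd
  intro S hS
  simp only [Finset.mem_powersetCard] at hS
  have hScard : S.card = k + m + 1 := hS.2
  have hSne : S.Nonempty := Finset.card_pos.mp (by omega)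
  have hq0 : (∏ i ∈ S, b i) / S.gcd b ≠ 0 := (quot_pos b hb hSne).ne'
  have hlk := (ell_pos b hb k).ne'
  have hlm := (ell_pos b hb m).ne'
  rw [← Nat.factorization_le_iff_dvd hq0 (by positivity), Finsupp.le_def]
  intro p
  by_cases hp : p.Prime
  swap
  · simp [Nat.factorization_eq_zero_of_not_prime _ hp]
  obtain ⟨i, hiS, hmin⟩ := Finset.exists_min_image S (fun j => (b j).factorization p) hSne
  have hcard' : k ≤ (S.erase i).card := by rw [Finset.card_erase_of_mem hiS]; omega
  obtain ⟨A', hA'sub, hA'card⟩ := Finset.exists_subset_card_eq hcard'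
  have hiA' : i ∉ A' := fun h => (Finset.mem_erase.mp (hA'sub h)).1 rfl
  set A : Finset (Fin (n + 1)) := insert i A' with hA
  have hAsub : A ⊆ S := Finset.insert_subset hiS (hA'sub.trans (Finset.erase_subset _ _))
  have hAcard : A.card = k + 1 := by rw [hA, Finset.card_insert_of_notMem hiA', hA'card]
  have hiA : i ∈ A := Finset.mem_insert_self _ _
  set B : Finset (Fin (n + 1)) := insert i (S \ A) with hB
  have hiSA : i ∉ S \ A := fun h => (Finset.mem_sdiff.mp h).2 hiA
  have hBcard : B.card = m + 1 := by
    rw [hB, Finset.card_insert_of_notMem hiSA, Finset.card_sdiff_of_subset hAsub, hScard, hAcard]; omega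
  have hBsub : B ⊆ S := Finset.insert_subset hiS (Finset.sdiff_subset)
  have hiB : i ∈ B := Finset.mem_insert_self _ _
  set v : Fin (n + 1) → ℕ := fun j => (b j).factorization p with hv
  have gcd_val : ∀ T : Finset (Fin (n + 1)), T ⊆ S → i ∈ T →
      (T.gcd b).factorization p = v i := by
    intro T hTS hiT
    have hgpos : T.gcd b ≠ 0 := fun h => (hb i).ne' (Finset.gcd_eq_zero_iff.mp h i hiT)
    apply le_antisymm
    · exact fact_le_of_dvd hgpos (hb i).ne' (Finset.gcd_dvd hiT) p
    · rw [← hp.pow_dvd_iff_le_factorization hgpos]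
      refine Finset.dvd_gcd fun j hjT => ?_
      exact dvd_trans (pow_dvd_pow p (hmin j (hTS hjT))) (Nat.ordProj_dvd _ _)
  have quot_val : ∀ T : Finset (Fin (n + 1)), T ⊆ S → i ∈ T →
      (((∏ j ∈ T, b j) / T.gcd b).factorization) p = (∑ j ∈ T, v j) - v i := by
    intro T hTS hiT
    have hgcd : T.gcd b ∣ ∏ j ∈ T, b j :=
      (Finset.gcd_dvd hiT).trans (Finset.dvd_prod_of_mem b hiT)
    rw [Nat.factorization_div hgcd, Finsupp.tsub_apply,
      Nat.factorization_prod (fun j _ => (hb j).ne'), gcd_val T hTS hiT]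
    simp [hv]
  have hvS := quot_val S (le_refl S) hiS
  have hvA := quot_val A hAsub hiA
  have hvB := quot_val B hBsub hiB
  have hfA : ((∏ j ∈ A, b j) / A.gcd b).factorization p ≤ (ell b k).factorization p :=
    fact_le_of_dvd (quot_pos b hb ⟨i, hiA⟩).ne' hlk
      (Finset.dvd_lcm (Finset.mem_powersetCard.mpr ⟨Finset.subset_univ A, hAcard⟩)) p
  have hfB : ((∏ j ∈ B, b j) / B.gcd b).factorization p ≤ (ell b m).factorization p :=
    fact_le_of_dvd (quot_pos b hb ⟨i, hiB⟩).ne' hlm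
      (Finset.dvd_lcm (Finset.mem_powersetCard.mpr ⟨Finset.subset_univ B, hBcard⟩)) p
  -- sum identities
  have hsumA : ∑ j ∈ A, v j = v i + ∑ j ∈ A', v j := by
    rw [hA, Finset.sum_insert hiA']
  have hsumB : ∑ j ∈ B, v j = v i + ∑ j ∈ S \ A, v j := by
    rw [hB, Finset.sum_insert hiSA]
  have hsumS : ∑ j ∈ S, v j = ∑ j ∈ S \ A, v j + ∑ j ∈ A, v j :=
    (Finset.sum_sdiff hAsub).symm
  have hviA : v i ≤ ∑ j ∈ A, v j := Finset.single_le_sum (fun j _ => Nat.zero_le _) hiA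
  rw [Nat.factorization_mul hlk hlm, Finsupp.add_apply, hvS]
  omega
end aux

/-- arithmetic cancellation helper -/
theorem kawDivHelper {a c d e f : ℕ} (hc : 0 < c) (h1 : c ∣ a * d) (h2 : e ∣ c * f) :
    (a * d / c) * (c * f / e) = a * d * f / e := by
  rw [Nat.div_mul_div_comm h1 h2,
    show a * d * (c * f) = c * (a * d * f) by ring,
    show c * e = c * e from rfl, ← Nat.mul_div_mul_left (a * d * f) e hc]

section coeffs
variable {n : ℕ} (b : Fin (n + 1) → ℕ) (hb : ∀ i, 0 < b i)
include hb

theorem key1 (k m q : ℕ) :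
    (ell b k * ell b m / ell b (k + m)) * (ell b (k + m) * ell b q / ell b (k + m + q))
      = ell b k * ell b m * ell b q / ell b (k + m + q) :=
  kawDivHelper (ell_pos b hb (k + m)) (ell_dvd_mul b hb k m)
    (ell_dvd_mul b hb (k + m) q)

theorem key2 (k m q : ℕ) :
    (ell b m * ell b q / ell b (m + q)) * (ell b k * ell b (m + q) / ell b (k + (m + q)))
      = ell b k * ell b m * ell b q / ell b (k + m + q) := by
  have h2 : ell b (k + (m + q)) ∣ ell b (m + q) * ell b k := by
    have h := ell_dvd_mul b hb (m + q) k
    rwa [show m + q + k = k + (m + q) by omega] at h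
  rw [show ell b k * ell b (m + q) = ell b (m + q) * ell b k from mul_comm _ _,
    kawDivHelper (ell_pos b hb (m + q)) (ell_dvd_mul b hb m q) h2,
    show ell b m * ell b q * ell b k = ell b k * ell b m * ell b q by ring,
    ← Nat.add_assoc]
end coeffs

/-- collapse a sum over `Fin (n+1)` pinned to value `K` -/
theorem kawSumCollapse {n : ℕ} (e : ℕ → ℤ) (K : ℕ) (Q : Prop) [Decidable Q] (hQ : Q → K ≤ n) :
    (∑ p : Fin (n + 1), if (p : ℕ) = K ∧ Q then e p else 0) = if Q then e K else 0 := by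
  by_cases hq : Q
  · simp only [hq, and_true, if_true]
    have hK : K < n + 1 := Nat.lt_succ_of_le (hQ hq)
    rw [Finset.sum_eq_single (⟨K, hK⟩ : Fin (n + 1))]
    · simp
    · intro p _ hne
      rw [if_neg fun h => hne (Fin.ext h)]
    · simp
  · simp [hq]

/-- the coefficient as an integer -/
def kawC {n : ℕ} (b : Fin (n + 1) → ℕ) (a a' : ℕ) : ℤ :=
  ((ell b a * ell b a' / ell b (a + a') : ℕ) : ℤ)

def kawD {n : ℕ} (b : Fin (n + 1) → ℕ) (k m q : ℕ) : ℤ :=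
  ((ell b k * ell b m * ell b q / ell b (k + m + q) : ℕ) : ℤ)

section czlem
variable {n : ℕ} (b : Fin (n + 1) → ℕ) (hb : ∀ i, 0 < b i)
include hb

theorem kawC_mul1 (k m q : ℕ) : kawC b k m * kawC b (k + m) q = kawD b k m q := by
  rw [kawC, kawC, kawD, ← Nat.cast_mul, key1 b hb]

theorem kawC_mul2 (k m q : ℕ) : kawC b m q * kawC b k (m + q) = kawD b k m q := by
  rw [kawC, kawC, kawD, ← Nat.cast_mul, key2 b hb]

omit hb in
theorem kawC_comm (k m : ℕ) : kawC b k m = kawC b m k := by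
  rw [kawC, kawC, mul_comm (ell b k), Nat.add_comm]

theorem kawC_zero (m : ℕ) : kawC b 0 m = 1 := by
  rw [kawC, ell_zero b hb, one_mul, Nat.zero_add, Nat.div_self (ell_pos b hb m), Nat.cast_one]
end czlem

/-- generic reorder-and-collapse for the left-associated product -/
theorem kawQuadCollapse1 {n : ℕ} (j : Fin (n + 1))
    (f : Fin (n + 1) → Fin (n + 1) → Fin (n + 1) → ℕ → ℤ) :
    (∑ p : Fin (n + 1), ∑ q : Fin (n + 1), ∑ k : Fin (n + 1), ∑ m : Fin (n + 1),
        if ((k : ℕ) + (m : ℕ) = (p : ℕ) ∧ (p : ℕ) + (q : ℕ) = (j : ℕ)) then f k m q (p : ℕ) else 0)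
      = ∑ k : Fin (n + 1), ∑ m : Fin (n + 1), ∑ q : Fin (n + 1),
          if ((k : ℕ) + (m : ℕ) + (q : ℕ) = (j : ℕ)) then f k m q ((k : ℕ) + (m : ℕ)) else 0 := by
  have hj : (j : ℕ) ≤ n := Nat.lt_succ_iff.mp j.isLt
  calc (∑ p : Fin (n + 1), ∑ q : Fin (n + 1), ∑ k : Fin (n + 1), ∑ m : Fin (n + 1),
        if ((k : ℕ) + (m : ℕ) = (p : ℕ) ∧ (p : ℕ) + (q : ℕ) = (j : ℕ)) then f k m q (p : ℕ) else 0)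
      = ∑ q : Fin (n + 1), ∑ p : Fin (n + 1), ∑ k : Fin (n + 1), ∑ m : Fin (n + 1),
        if ((k : ℕ) + (m : ℕ) = (p : ℕ) ∧ (p : ℕ) + (q : ℕ) = (j : ℕ)) then f k m q (p : ℕ) else 0 :=
        Finset.sum_comm
    _ = ∑ q : Fin (n + 1), ∑ k : Fin (n + 1), ∑ p : Fin (n + 1), ∑ m : Fin (n + 1),
        if ((k : ℕ) + (m : ℕ) = (p : ℕ) ∧ (p : ℕ) + (q : ℕ) = (j : ℕ)) then f k m q (p : ℕ) else 0 :=
        Finset.sum_congr rfl fun q _ => Finset.sum_comm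
    _ = ∑ q : Fin (n + 1), ∑ k : Fin (n + 1), ∑ m : Fin (n + 1), ∑ p : Fin (n + 1),
        if ((k : ℕ) + (m : ℕ) = (p : ℕ) ∧ (p : ℕ) + (q : ℕ) = (j : ℕ)) then f k m q (p : ℕ) else 0 :=
        Finset.sum_congr rfl fun q _ => Finset.sum_congr rfl fun k _ => Finset.sum_comm
    _ = ∑ q : Fin (n + 1), ∑ k : Fin (n + 1), ∑ m : Fin (n + 1),
          if ((k : ℕ) + (m : ℕ) + (q : ℕ) = (j : ℕ)) then f k m q ((k : ℕ) + (m : ℕ)) else 0 := by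
        refine Finset.sum_congr rfl fun q _ => Finset.sum_congr rfl fun k _ =>
          Finset.sum_congr rfl fun m _ => ?_
        calc (∑ p : Fin (n + 1),
                if ((k : ℕ) + (m : ℕ) = (p : ℕ) ∧ (p : ℕ) + (q : ℕ) = (j : ℕ)) then f k m q (p : ℕ) else 0)
            = ∑ p : Fin (n + 1),
                if ((p : ℕ) = (k : ℕ) + (m : ℕ) ∧ (k : ℕ) + (m : ℕ) + (q : ℕ) = (j : ℕ)) then f k m q (p : ℕ) else 0 :=
              Finset.sum_congr rfl fun p _ => if_congr (by omega) rfl rfl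
          _ = if ((k : ℕ) + (m : ℕ) + (q : ℕ) = (j : ℕ)) then f k m q ((k : ℕ) + (m : ℕ)) else 0 :=
              kawSumCollapse (fun t => f k m q t) ((k : ℕ) + (m : ℕ)) _ (fun h => by omega)
    _ = ∑ k : Fin (n + 1), ∑ q : Fin (n + 1), ∑ m : Fin (n + 1),
          if ((k : ℕ) + (m : ℕ) + (q : ℕ) = (j : ℕ)) then f k m q ((k : ℕ) + (m : ℕ)) else 0 :=
        Finset.sum_comm
    _ = ∑ k : Fin (n + 1), ∑ m : Fin (n + 1), ∑ q : Fin (n + 1),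
          if ((k : ℕ) + (m : ℕ) + (q : ℕ) = (j : ℕ)) then f k m q ((k : ℕ) + (m : ℕ)) else 0 :=
        Finset.sum_congr rfl fun k _ => Finset.sum_comm

/-- generic reorder-and-collapse for the right-associated product -/
theorem kawQuadCollapse2 {n : ℕ} (j : Fin (n + 1))
    (f : Fin (n + 1) → Fin (n + 1) → Fin (n + 1) → ℕ → ℤ) :
    (∑ k : Fin (n + 1), ∑ M : Fin (n + 1), ∑ m : Fin (n + 1), ∑ q : Fin (n + 1),
        if ((m : ℕ) + (q : ℕ) = (M : ℕ) ∧ (k : ℕ) + (M : ℕ) = (j : ℕ)) then f k m q (M : ℕ) else 0)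
      = ∑ k : Fin (n + 1), ∑ m : Fin (n + 1), ∑ q : Fin (n + 1),
          if ((k : ℕ) + (m : ℕ) + (q : ℕ) = (j : ℕ)) then f k m q ((m : ℕ) + (q : ℕ)) else 0 := by
  have hj : (j : ℕ) ≤ n := Nat.lt_succ_iff.mp j.isLt
  refine Finset.sum_congr rfl fun k _ => ?_
  calc (∑ M : Fin (n + 1), ∑ m : Fin (n + 1), ∑ q : Fin (n + 1),
        if ((m : ℕ) + (q : ℕ) = (M : ℕ) ∧ (k : ℕ) + (M : ℕ) = (j : ℕ)) then f k m q (M : ℕ) else 0)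
      = ∑ m : Fin (n + 1), ∑ M : Fin (n + 1), ∑ q : Fin (n + 1),
        if ((m : ℕ) + (q : ℕ) = (M : ℕ) ∧ (k : ℕ) + (M : ℕ) = (j : ℕ)) then f k m q (M : ℕ) else 0 :=
        Finset.sum_comm
    _ = ∑ m : Fin (n + 1), ∑ q : Fin (n + 1), ∑ M : Fin (n + 1),
        if ((m : ℕ) + (q : ℕ) = (M : ℕ) ∧ (k : ℕ) + (M : ℕ) = (j : ℕ)) then f k m q (M : ℕ) else 0 :=
        Finset.sum_congr rfl fun m _ => Finset.sum_comm
    _ = ∑ m : Fin (n + 1), ∑ q : Fin (n + 1),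
          if ((k : ℕ) + (m : ℕ) + (q : ℕ) = (j : ℕ)) then f k m q ((m : ℕ) + (q : ℕ)) else 0 := by
        refine Finset.sum_congr rfl fun m _ => Finset.sum_congr rfl fun q _ => ?_
        calc (∑ M : Fin (n + 1),
                if ((m : ℕ) + (q : ℕ) = (M : ℕ) ∧ (k : ℕ) + (M : ℕ) = (j : ℕ)) then f k m q (M : ℕ) else 0)
            = ∑ M : Fin (n + 1),
                if ((M : ℕ) = (m : ℕ) + (q : ℕ) ∧ (k : ℕ) + (m : ℕ) + (q : ℕ) = (j : ℕ)) then f k m q (M : ℕ) else 0 :=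
              Finset.sum_congr rfl fun M _ => if_congr (by omega) rfl rfl
          _ = if ((k : ℕ) + (m : ℕ) + (q : ℕ) = (j : ℕ)) then f k m q ((m : ℕ) + (q : ℕ)) else 0 :=
              kawSumCollapse (fun t => f k m q t) ((m : ℕ) + (q : ℕ)) _ (fun h => by omega)

section assoc
variable {n : ℕ} (b : Fin (n + 1) → ℕ) (hb : ∀ i, 0 < b i)
include hb

theorem kaw_left (x y z : Fin (n + 1) → ℤ) (j : Fin (n + 1)) :
    kawasakiMul b (kawasakiMul b x y) z j
      = ∑ k : Fin (n + 1), ∑ m : Fin (n + 1), ∑ q : Fin (n + 1),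
          if ((k : ℕ) + (m : ℕ) + (q : ℕ) = (j : ℕ)) then
            x k * y m * z q * kawD b (k : ℕ) (m : ℕ) (q : ℕ) else 0 := by
  calc kawasakiMul b (kawasakiMul b x y) z j
      = ∑ p : Fin (n + 1), ∑ q : Fin (n + 1),
          if ((p : ℕ) + (q : ℕ) = (j : ℕ)) then
            (∑ k : Fin (n + 1), ∑ m : Fin (n + 1),
              if ((k : ℕ) + (m : ℕ) = (p : ℕ)) then x k * y m * kawC b (k : ℕ) (m : ℕ) else 0)
            * z q * kawC b (p : ℕ) (q : ℕ) else 0 := rfl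
    _ = ∑ p : Fin (n + 1), ∑ q : Fin (n + 1), ∑ k : Fin (n + 1), ∑ m : Fin (n + 1),
          if ((k : ℕ) + (m : ℕ) = (p : ℕ) ∧ (p : ℕ) + (q : ℕ) = (j : ℕ)) then
            x k * y m * kawC b (k : ℕ) (m : ℕ) * (z q * kawC b (p : ℕ) (q : ℕ)) else 0 := by
        refine Finset.sum_congr rfl fun p _ => Finset.sum_congr rfl fun q _ => ?_
        by_cases hc : (p : ℕ) + (q : ℕ) = (j : ℕ)
        · simp only [hc, if_true, and_true, Finset.sum_mul, ite_mul, zero_mul, mul_assoc]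
        · simp [hc]
    _ = ∑ k : Fin (n + 1), ∑ m : Fin (n + 1), ∑ q : Fin (n + 1),
          if ((k : ℕ) + (m : ℕ) + (q : ℕ) = (j : ℕ)) then
            x k * y m * kawC b (k : ℕ) (m : ℕ) * (z q * kawC b ((k : ℕ) + (m : ℕ)) (q : ℕ)) else 0 :=
        kawQuadCollapse1 j (fun k m q t => x k * y m * kawC b (k : ℕ) (m : ℕ) * (z q * kawC b t (q : ℕ)))
    _ = ∑ k : Fin (n + 1), ∑ m : Fin (n + 1), ∑ q : Fin (n + 1),
          if ((k : ℕ) + (m : ℕ) + (q : ℕ) = (j : ℕ)) then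
            x k * y m * z q * kawD b (k : ℕ) (m : ℕ) (q : ℕ) else 0 := by
        refine Finset.sum_congr rfl fun k _ => Finset.sum_congr rfl fun m _ =>
          Finset.sum_congr rfl fun q _ => if_congr Iff.rfl ?_ rfl
        calc x k * y m * kawC b (k : ℕ) (m : ℕ) * (z q * kawC b ((k : ℕ) + (m : ℕ)) (q : ℕ))
            = x k * y m * z q * (kawC b (k : ℕ) (m : ℕ) * kawC b ((k : ℕ) + (m : ℕ)) (q : ℕ)) := by
              ring
          _ = x k * y m * z q * kawD b (k : ℕ) (m : ℕ) (q : ℕ) := by rw [kawC_mul1 b hb]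

theorem kaw_right (x y z : Fin (n + 1) → ℤ) (j : Fin (n + 1)) :
    kawasakiMul b x (kawasakiMul b y z) j
      = ∑ k : Fin (n + 1), ∑ m : Fin (n + 1), ∑ q : Fin (n + 1),
          if ((k : ℕ) + (m : ℕ) + (q : ℕ) = (j : ℕ)) then
            x k * y m * z q * kawD b (k : ℕ) (m : ℕ) (q : ℕ) else 0 := by
  calc kawasakiMul b x (kawasakiMul b y z) j
      = ∑ k : Fin (n + 1), ∑ M : Fin (n + 1),
          if ((k : ℕ) + (M : ℕ) = (j : ℕ)) then
            x k * (∑ m : Fin (n + 1), ∑ q : Fin (n + 1),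
              if ((m : ℕ) + (q : ℕ) = (M : ℕ)) then y m * z q * kawC b (m : ℕ) (q : ℕ) else 0)
            * kawC b (k : ℕ) (M : ℕ) else 0 := rfl
    _ = ∑ k : Fin (n + 1), ∑ M : Fin (n + 1), ∑ m : Fin (n + 1), ∑ q : Fin (n + 1),
          if ((m : ℕ) + (q : ℕ) = (M : ℕ) ∧ (k : ℕ) + (M : ℕ) = (j : ℕ)) then
            y m * z q * kawC b (m : ℕ) (q : ℕ) * (x k * kawC b (k : ℕ) (M : ℕ)) else 0 := by
        refine Finset.sum_congr rfl fun k _ => Finset.sum_congr rfl fun M _ => ?_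
        by_cases hc : (k : ℕ) + (M : ℕ) = (j : ℕ)
        · rw [if_pos hc,
            show ∀ S : ℤ, x k * S * kawC b (k : ℕ) (M : ℕ) = S * (x k * kawC b (k : ℕ) (M : ℕ))
              from fun S => by ring]
          simp only [Finset.sum_mul, ite_mul, zero_mul, hc, and_true]
        · simp [hc]
    _ = ∑ k : Fin (n + 1), ∑ m : Fin (n + 1), ∑ q : Fin (n + 1),
          if ((k : ℕ) + (m : ℕ) + (q : ℕ) = (j : ℕ)) then
            y m * z q * kawC b (m : ℕ) (q : ℕ) * (x k * kawC b (k : ℕ) ((m : ℕ) + (q : ℕ))) else 0 :=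
        kawQuadCollapse2 j (fun k m q t => y m * z q * kawC b (m : ℕ) (q : ℕ) * (x k * kawC b (k : ℕ) t))
    _ = ∑ k : Fin (n + 1), ∑ m : Fin (n + 1), ∑ q : Fin (n + 1),
          if ((k : ℕ) + (m : ℕ) + (q : ℕ) = (j : ℕ)) then
            x k * y m * z q * kawD b (k : ℕ) (m : ℕ) (q : ℕ) else 0 := by
        refine Finset.sum_congr rfl fun k _ => Finset.sum_congr rfl fun m _ =>
          Finset.sum_congr rfl fun q _ => if_congr Iff.rfl ?_ rfl
        calc y m * z q * kawC b (m : ℕ) (q : ℕ) * (x k * kawC b (k : ℕ) ((m : ℕ) + (q : ℕ)))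
            = x k * y m * z q * (kawC b (m : ℕ) (q : ℕ) * kawC b (k : ℕ) ((m : ℕ) + (q : ℕ))) := by
              ring
          _ = x k * y m * z q * kawD b (k : ℕ) (m : ℕ) (q : ℕ) := by rw [kawC_mul2 b hb]
end assoc

set_option maxHeartbeats 2000000 in
/-- for positive integers `b_0, …, b_n`, the free abelian group on
`γ_0, …, γ_n` with the multiplication `γ_k · γ_m = (ℓ_k ℓ_m / ℓ_{k+m}) γ_{k+m}`
(for `k + m ≤ n`; zero otherwise) is a commutative, associative, unital
(distributive) ring with unit `γ_0`. -/
theorem kawasakiMul_commRing {n : ℕ} (b : Fin (n + 1) → ℕ) (hb : ∀ i, 0 < b i) :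
    (∀ x y, kawasakiMul b x y = kawasakiMul b y x) ∧
    (∀ x y z, kawasakiMul b (kawasakiMul b x y) z
        = kawasakiMul b x (kawasakiMul b y z)) ∧
    (∀ x y z, kawasakiMul b x (y + z) = kawasakiMul b x y + kawasakiMul b x z) ∧
    (∀ x y z, kawasakiMul b (x + y) z = kawasakiMul b x z + kawasakiMul b y z) ∧
    (∀ x, kawasakiMul b (Pi.single 0 1) x = x) ∧
    (∀ x, kawasakiMul b x (Pi.single 0 1) = x) := by
  have hcomm : ∀ x y, kawasakiMul b x y = kawasakiMul b y x := by
    intro x y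
    funext j
    show (∑ k : Fin (n + 1), ∑ m : Fin (n + 1),
        if ((k : ℕ) + (m : ℕ) = (j : ℕ)) then x k * y m * kawC b (k : ℕ) (m : ℕ) else 0)
      = ∑ k : Fin (n + 1), ∑ m : Fin (n + 1),
        if ((k : ℕ) + (m : ℕ) = (j : ℕ)) then y k * x m * kawC b (k : ℕ) (m : ℕ) else 0
    rw [Finset.sum_comm]
    refine Finset.sum_congr rfl fun k _ => Finset.sum_congr rfl fun m _ =>
      if_congr (by omega) ?_ rfl
    rw [kawC_comm b (m : ℕ) (k : ℕ), mul_comm (x m) (y k)]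
  have hone : ∀ x, kawasakiMul b (Pi.single 0 1) x = x := by
    intro x
    funext j
    show (∑ k : Fin (n + 1), ∑ m : Fin (n + 1),
        if ((k : ℕ) + (m : ℕ) = (j : ℕ)) then
          (Pi.single 0 1 : Fin (n + 1) → ℤ) k * x m * kawC b (k : ℕ) (m : ℕ) else 0) = x j
    rw [Finset.sum_eq_single (0 : Fin (n + 1))]
    · calc (∑ m : Fin (n + 1),
            if (((0 : Fin (n + 1)) : ℕ) + (m : ℕ) = (j : ℕ)) then
              (Pi.single 0 1 : Fin (n + 1) → ℤ) 0 * x m * kawC b ((0 : Fin (n + 1)) : ℕ) (m : ℕ)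
            else 0)
          = ∑ m : Fin (n + 1), if (m = j) then x m else 0 := by
            refine Finset.sum_congr rfl fun m _ => if_congr ?_ ?_ rfl
            · simp [Fin.ext_iff]
            · have h0 : ((0 : Fin (n + 1)) : ℕ) = 0 := rfl
              rw [h0, kawC_zero b hb, Pi.single_eq_same]
              ring
        _ = x j := by simp
    · intro k _ hk
      apply Finset.sum_eq_zero
      intro m _
      rw [Pi.single_eq_of_ne hk, zero_mul, zero_mul, ite_self]
    · simp
  refine ⟨hcomm, ?_, ?_, ?_, hone, fun x => (hcomm x _).trans (hone x)⟩
  · intro x y z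
    funext j
    rw [kaw_left b hb x y z j, kaw_right b hb x y z j]
  · intro x y z
    funext j
    simp only [kawasakiMul, Pi.add_apply, ← Finset.sum_add_distrib]
    refine Finset.sum_congr rfl fun k _ => Finset.sum_congr rfl fun m _ => ?_
    by_cases hc : (k : ℕ) + (m : ℕ) = (j : ℕ) <;> simp [hc] <;> ring
  · intro x y z
    funext j
    simp only [kawasakiMul, Pi.add_apply, ← Finset.sum_add_distrib]
    refine Finset.sum_congr rfl fun k _ => Finset.sum_congr rfl fun m _ => ?_
    by_cases hc : (k : ℕ) + (m : ℕ) = (j : ℕ) <;> simp [hc] <;> ring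
end
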